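/- Let a < 0, k₋ = √(-a/2), and A_T > k₋. If T ≥ (1/(4k₋)) · ln((A_T + k₋)/(A_T - k₋)), then there exists no differentiable function A : [0, T] → ℝ satisfying A'(t) = -a - 2·A(t)² for all t ∈ [0, T] together with A(T) = A_T. Hence for a < 0 and terminal data A_T > k₋ the solution does not exist for all T. -/

import Mathlib

/-- For `a < 0`, `k₋ = √(-a/2)` and terminal data `A_T > k₋`, if
`T ≥ (1/(4k₋)) ln((A_T + k₋)/(A_T - k₋))` then there is no differentiable function
`A : [0,T] → ℝ` solving the Riccati equation `A' = -a - 2A²` on `[0, T]` with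
`A(T) = A_T`. Hence for `a < 0` and `A_T > k₋` the solution does not exist for
all `T`. -/
theorem riccati_nonexistence_a_neg
    (a T A_T k : ℝ) (ha : a < 0) (hk : k = Real.sqrt (-a / 2)) (hAT : k < A_T)
    (hT : T ≥ (1 / (4 * k)) * Real.log ((A_T + k) / (A_T - k))) :
    ¬ ∃ A : ℝ → ℝ,
        (∀ t ∈ Set.Icc (0 : ℝ) T, HasDerivAt A (-a - 2 * (A t) ^ 2) t) ∧
        A T = A_T := by
  rintro ⟨A, hA, hAT'⟩
  have hk0 : 0 < k := by
    rw [hk]; exact Real.sqrt_pos.mpr (by linarith)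
  have hk2 : k ^ 2 = -a / 2 := by
    rw [hk]; exact Real.sq_sqrt (by linarith)
  have hA' : ∀ t : ℝ, -a - 2 * (A t) ^ 2 = -2 * (A t - k) * (A t + k) := by
    intro t; linear_combination (-2 : ℝ) * hk2
  have hATk : 0 < A_T - k := by linarith
  have hATk' : 0 < A_T + k := by linarith
  have hratio : 1 < (A_T + k) / (A_T - k) := by
    rw [lt_div_iff₀ hATk]; linarith
  set ts : ℝ := (1 / (4 * k)) * Real.log ((A_T + k) / (A_T - k)) with hts
  have hlogpos : 0 < Real.log ((A_T + k) / (A_T - k)) := Real.log_pos hratio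
  have hts0 : 0 < ts := by positivity
  set t0 : ℝ := T - ts with ht0
  have ht0mem : t0 ∈ Set.Icc (0 : ℝ) T := ⟨by rw [ht0]; linarith, by rw [ht0]; linarith⟩
  have hTmem : T ∈ Set.Icc (0 : ℝ) T := ⟨by linarith, le_refl T⟩
  have hexp : ∀ t : ℝ, HasDerivAt (fun s => Real.exp (4 * k * s)) (Real.exp (4 * k * t) * (4 * k)) t := by
    intro t
    have h1 : HasDerivAt (fun s : ℝ => 4 * k * s) (4 * k) t := by
      simpa using (hasDerivAt_id t).const_mul (4 * k)
    exact h1.exp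
  -- Step 1: P nonincreasing on Icc
  set P : ℝ → ℝ := fun t => (A t - k) * Real.exp (4 * k * t) with hP
  have hPderiv : ∀ t ∈ Set.Icc (0 : ℝ) T,
      HasDerivAt P ((-2 * (A t - k) ^ 2) * Real.exp (4 * k * t)) t := by
    intro t ht
    have h := ((hA t ht).sub_const k).mul (hexp t)
    convert h using 1
    · rfl
    · rfl
    · rfl
    rw [hA' t]; ring
  have hPanti : AntitoneOn P (Set.Icc 0 T) := by
    apply antitoneOn_of_deriv_nonpos (convex_Icc 0 T)
    · exact fun t ht => (hPderiv t ht).continuousAt.continuousWithinAt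
    · intro t ht
      rw [interior_Icc] at ht
      exact (hPderiv t (Set.mem_Icc_of_Ioo ht)).differentiableAt.differentiableWithinAt
    · intro t ht
      rw [interior_Icc] at ht
      rw [(hPderiv t (Set.mem_Icc_of_Ioo ht)).deriv]
      apply mul_nonpos_of_nonpos_of_nonneg
      · nlinarith [sq_nonneg (A t - k)]
      · exact (Real.exp_pos _).le
  have hgt : ∀ t ∈ Set.Icc (0 : ℝ) T, k < A t := by
    intro t ht
    have h1 : P T ≤ P t := hPanti ht hTmem ht.2
    have h2 : 0 < P T := by
      rw [hP]; simp only [hAT']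
      positivity
    have h3 : 0 < (A t - k) * Real.exp (4 * k * t) := lt_of_lt_of_le h2 h1
    have h4 : (0:ℝ) < Real.exp (4 * k * t) := Real.exp_pos _
    nlinarith
  -- Step 2: G constant on Icc
  set G : ℝ → ℝ := fun t => (A t - k) / (A t + k) * Real.exp (4 * k * t) with hG
  have hGderiv : ∀ t ∈ Set.Icc (0 : ℝ) T, HasDerivAt G 0 t := by
    intro t ht
    have hv : 0 < A t + k := by have := hgt t ht; linarith
    have hv' : A t + k ≠ 0 := ne_of_gt hv
    have hdiv : HasDerivAt (fun s => (A s - k) / (A s + k))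
        (((-a - 2 * (A t) ^ 2) * (A t + k) - (A t - k) * (-a - 2 * (A t) ^ 2)) / (A t + k) ^ 2) t :=
      ((hA t ht).sub_const k).div ((hA t ht).add_const k) hv'
    have h := hdiv.mul (hexp t)
    convert h using 1
    · rfl
    · rfl
    · rfl
    rw [hA' t]
    field_simp
    ring
  have hGcont : ContinuousOn G (Set.Icc 0 T) :=
    fun t ht => (hGderiv t ht).continuousAt.continuousWithinAt
  have hGconst : ∀ t ∈ Set.Icc (0 : ℝ) T, G t = G 0 := by
    apply constant_of_has_deriv_right_zero hGcont
    intro t ht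
    exact (hGderiv t (Set.mem_Icc_of_Ico ht)).hasDerivWithinAt
  have hGeq : G t0 = G T := by
    rw [hGconst t0 ht0mem, hGconst T hTmem]
  -- Step 3: contradiction
  have hexpT : Real.exp (4 * k * t0) * ((A_T + k) / (A_T - k)) = Real.exp (4 * k * T) := by
    have hts4 : 4 * k * ts = Real.log ((A_T + k) / (A_T - k)) := by
      rw [hts]; field_simp
    rw [ht0, show 4 * k * (T - ts) = 4 * k * T - 4 * k * ts by ring,
      Real.exp_sub, hts4, Real.exp_log (by positivity)]
    field_simp
  have hv0 : 0 < A t0 + k := by have := hgt t0 ht0mem; linarith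
  have hG0 : (A t0 - k) / (A t0 + k) * Real.exp (4 * k * t0)
      = (A_T - k) / (A_T + k) * Real.exp (4 * k * T) := by
    have h := hGeq
    rw [hG] at h
    simpa [hAT'] using h
  rw [← hexpT] at hG0
  have hexpos : (0:ℝ) < Real.exp (4 * k * t0) := Real.exp_pos _
  have hrhs : (A_T - k) / (A_T + k) * (Real.exp (4 * k * t0) * ((A_T + k) / (A_T - k)))
      = Real.exp (4 * k * t0) := by
    field_simp
  rw [hrhs] at hG0
  have hkey : (A t0 - k) / (A t0 + k) = 1 := by
    have := mul_right_cancel₀ (ne_of_gt hexpos) (hG0.trans (one_mul _).symm)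
    exact this
  rw [div_eq_one_iff_eq (ne_of_gt hv0)] at hkey
  linarith
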